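/- arXiv:0801.4076 — 4 statements merged into one kernel-verified Lean document; each statement's English description precedes it below -/
import Mathlib

section
/- Every composition algebra is alternative: a²c = a(ac) and (ca)a = ca² hold for all a, c. -/
open QuadraticMap

/-- Every composition algebra is alternative:
`a²c = a(ac)` and `(ca)a = ca²` for all `a, c`. -/
theorem stmt_6 {k A : Type*} [Field k] [NonAssocRing A] [Module k A]
    [SMulCommClass k A A] [IsScalarTower k A A]
    (n : QuadraticForm k A)
    (hnd : ∀ a : A, (∀ b : A, polar (⇑n) a b = 0) → a = 0)
    (hm : ∀ a b : A, n (a * b) = n a * n b) :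
    ∀ a c : A, a * a * c = a * (a * c) ∧ c * a * a = c * (a * a) := by
  set P : A → A → k := fun x y => polar (⇑n) x y with hP
  -- L1 : P (a*c) (b*c) = P a b * n c
  have L1 : ∀ a b c : A, P (a * c) (b * c) = P a b * n c := by
    intro a b c
    have h := hm (a + b) c
    rw [add_mul] at h
    simp only [hP, polar, hm]
    linear_combination h
  -- L2 : P (a*b) (a*c) = n a * P b c
  have L2 : ∀ a b c : A, P (a * b) (a * c) = n a * P b c := by
    intro a b c
    have h := hm a (b + c)
    rw [mul_add] at h
    simp only [hP, polar, hm]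
    linear_combination h
  -- full linearization : P (a*c) (b*d) + P (a*d) (b*c) = P a b * P c d
  have L3 : ∀ a b c d : A, P (a * c) (b * d) + P (a * d) (b * c) = P a b * P c d := by
    intro a b c d
    have h := L1 a b (c + d)
    simp only [mul_add, hP] at h
    rw [polar_add_left, polar_add_right, polar_add_right] at h
    have hc := L1 a b c
    have hd := L1 a b d
    have hcd : n (c + d) = polar (⇑n) c d + n c + n d := by
      simp [polar]; ring
    simp only [hP] at hc hd ⊢
    rw [hcd] at h
    linear_combination h - hc - hd
  -- (A) : P (a*b) c + P (a*c) b = P a 1 * P b c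
  have hA : ∀ a b c : A, P (a * b) c + P (a * c) b = P a 1 * P b c := by
    intro a b c
    have := L3 a 1 b c
    simpa [one_mul] using this
  -- (A') : P (b*a) d + P b (d*a) = P a 1 * P b d
  have hA' : ∀ a b d : A, P (b * a) d + P b (d * a) = P a 1 * P b d := by
    intro a b d
    have := L3 b d a 1
    simpa [mul_one, mul_comm] using this
  -- expanding polar of a difference against things of the shape t • x - s • y
  have hexp : ∀ (x : A) (t s : k) (u v d : A),
      polar (⇑n) (x - (t • u - s • v)) d = P x d - (t * P u d - s * P v d) := by
    intro x t s u v d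
    simp only [hP]
    rw [polar_sub_left, polar_sub_left, polar_smul_left, polar_smul_left,
      smul_eq_mul, smul_eq_mul]
  have Psymm : ∀ x y : A, P x y = P y x := fun x y => polar_comm (⇑n) x y
  -- Cayley–Hamilton : a * a = P a 1 • a - n a • 1
  have CH : ∀ a : A, a * a = P a 1 • a - n a • (1 : A) := by
    intro a
    refine sub_eq_zero.mp (hnd _ (fun d => ?_))
    rw [hexp]
    have h1 := hA a a d
    have h2 : P (a * d) a = n a * P 1 d := by
      have := L2 a d 1
      rw [mul_one] at this
      rw [this, Psymm d 1]
    rw [h2] at h1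
    linear_combination h1
  intro a c
  constructor
  · -- left alternative
    have hlhs : a * a * c = P a 1 • (a * c) - n a • c := by
      rw [CH a, sub_mul, smul_mul_assoc, smul_mul_assoc, one_mul]
    have : a * (a * c) = P a 1 • (a * c) - n a • c := by
      refine sub_eq_zero.mp (hnd _ (fun d => ?_))
      rw [hexp]
      have h1 := hA a (a * c) d
      have h2 : P (a * d) (a * c) = n a * P c d := by
        rw [L2 a d c, Psymm c d]
      rw [h2] at h1
      linear_combination h1
    rw [hlhs, this]
  · -- right alternative
    have hrhs : c * (a * a) = P a 1 • (c * a) - n a • c := by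
      rw [CH a, mul_sub, mul_smul_comm, mul_smul_comm, mul_one]
    have : c * a * a = P a 1 • (c * a) - n a • c := by
      refine sub_eq_zero.mp (hnd _ (fun d => ?_))
      rw [hexp]
      have h1 := hA' a (c * a) d
      have h2 : P (c * a) (d * a) = P c d * n a := L1 c d a
      rw [h2] at h1
      linear_combination h1
    rw [hrhs, this]
end

section
/- Let A be a unital algebra with an involutive anti-automorphism a ↦ ã fixing the unit such that a + ã and aã are scalar multiples of the unit for all a. Define n(a) by aã = n(a)e. If A is alternative then n is multiplicative: n(ab) = n(a)n(b) for all a, b. -/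
/-- Let `A` be a unital algebra with an involutive anti-automorphism `a ↦ σ a`
fixing the unit, such that `a + σ a` and `a * σ a` are scalar multiples of the unit for all
`a`. Define `n : A → k` by `a * σ a = n a • 1`. If `A` is alternative then `n` is
multiplicative: `n(ab) = n(a)n(b)` for all `a, b`. -/
theorem stmt_9 {k A : Type*} [Field k] [NonAssocRing A] [Module k A]
    [SMulCommClass k A A] [IsScalarTower k A A]
    (σ : A →ₗ[k] A)
    (hσmul : ∀ a b : A, σ (a * b) = σ b * σ a)
    (hσinv : ∀ a : A, σ (σ a) = a)
    (hσ1 : σ 1 = 1)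
    (htr : ∀ a : A, ∃ c : k, a + σ a = c • (1 : A))
    (hfaith : ∀ c d : k, c • (1 : A) = d • (1 : A) → c = d)
    (n : A → k) (hn : ∀ a : A, a * σ a = n a • (1 : A))
    (halt : ∀ x y : A, x * x * y = x * (x * y) ∧ y * x * x = y * (x * x)) :
    ∀ a b : A, n (a * b) = n a * n b := by
  classical
  choose t ht using htr
  have alt1 : ∀ x y : A, x * x * y = x * (x * y) := fun x y => (halt x y).1
  have alt2 : ∀ x y : A, y * x * x = y * (x * x) := fun x y => (halt x y).2
  -- linearized left alternative law
  have lin1 : ∀ x z y : A, x*z*y + z*x*y = x*(z*y) + z*(x*y) := by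
    intro x z y
    have h : (x*z*y + z*x*y) - (x*(z*y) + z*(x*y))
        = ((x+z)*(x+z)*y - (x+z)*((x+z)*y)) - (x*x*y - x*(x*y)) - (z*z*y - z*(z*y)) := by
      simp only [add_mul, mul_add]; abel
    rw [alt1 (x+z) y, alt1 x y, alt1 z y] at h
    simp only [sub_self, sub_zero, zero_sub] at h
    exact sub_eq_zero.mp h
  -- linearized right alternative law
  have lin2 : ∀ y x z : A, y*x*z + y*z*x = y*(x*z) + y*(z*x) := by
    intro y x z
    have h : (y*x*z + y*z*x) - (y*(x*z) + y*(z*x))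
        = (y*(x+z)*(x+z) - y*((x+z)*(x+z))) - (y*x*x - y*(x*x)) - (y*z*z - y*(z*z)) := by
      simp only [add_mul, mul_add]; abel
    rw [alt2 (x+z) y, alt2 x y, alt2 z y] at h
    simp only [sub_self, sub_zero, zero_sub] at h
    exact sub_eq_zero.mp h
  -- Moufang-type identity: (b*a)*(a*b) = b*(a*(a*b))
  have moufa : ∀ a b : A, b*a*(a*b) = b*(a*(a*b)) := by
    intro a b
    have k1 : a*(a*b)*b = a*((a*b)*b) := by
      calc a*(a*b)*b = a*a*b*b := by rw [← alt1 a b]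
        _ = a*a*(b*b) := alt2 b (a*a)
        _ = a*(a*(b*b)) := alt1 a (b*b)
        _ = a*((a*b)*b) := by rw [← alt2 b a]
    have k2 : a*b*(a*b) = a*(b*(a*b)) := by
      have h := lin2 a b (a*b)
      rw [k1] at h
      exact add_right_cancel h
    have h := lin1 b a (a*b)
    rw [k2] at h
    exact add_right_cancel h
  have hσa : ∀ x : A, σ x = t x • (1:A) - x := by
    intro x
    rw [← ht x]; abel
  have hcomm : ∀ x : A, σ x * x = n x • (1:A) := by
    intro x
    have h : σ x * x = x * σ x := by
      rw [hσa x]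
      simp only [sub_mul, mul_sub, smul_mul_assoc, mul_smul_comm, one_mul, mul_one]
    rw [h, hn]
  intro a b
  have hna : σ a * (a*b) = n a • b := by
    have h1 : σ a * (a*b) = σ a * a * b := by
      rw [hσa a]
      simp only [sub_mul, smul_mul_assoc, one_mul]
      rw [alt1 a b]
    rw [h1, hcomm a, smul_mul_assoc, one_mul]
  have hassoc : σ b * σ a * (a*b) = σ b * (σ a * (a*b)) := by
    rw [hσa a, hσa b]
    simp only [sub_mul, mul_sub, smul_mul_assoc, mul_smul_comm, one_mul, mul_one,
      smul_sub, smul_smul]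
    rw [moufa a b]
  have hmain : n (a*b) • (1:A) = (n a * n b) • (1:A) := by
    calc n (a*b) • (1:A)
        = σ (a*b) * (a*b) := (hcomm (a*b)).symm
      _ = σ b * σ a * (a*b) := by rw [hσmul]
      _ = σ b * (σ a * (a*b)) := hassoc
      _ = σ b * (n a • b) := by rw [hna]
      _ = n a • (σ b * b) := by rw [mul_smul_comm]
      _ = n a • (n b • (1:A)) := by rw [hcomm b]
      _ = (n a * n b) • (1:A) := by rw [smul_smul]
  exact hfaith _ _ hmain
end

section
/- Any injective unital algebra homomorphism between composition algebras is a partial isometry: if f : B → A is an injective homomorphism of composition algebras (B, n') and (A, n) with f(e') = e, then n(f(x)) = n'(x) for all x ∈ B. -/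
open QuadraticMap

section Aux
variable {k A : Type*} [Field k]
  [NonAssocRing A] [Module k A] [SMulCommClass k A A] [IsScalarTower k A A]

omit [SMulCommClass k A A] [IsScalarTower k A A] in
lemma aux_polar_mul (n : QuadraticForm k A) (hm : ∀ a b : A, n (a * b) = n a * n b)
    (x y z : A) :
    polar (⇑n) (x*y) (x*z) = n x * polar (⇑n) y z := by
  simp only [QuadraticMap.polar, ← mul_add, hm]
  ring

lemma aux_exchange (n : QuadraticForm k A) (hm : ∀ a b : A, n (a * b) = n a * n b)
    (x w y z : A) :
    polar (⇑n) (x*y) (w*z) + polar (⇑n) (w*y) (x*z)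
      = polar (⇑n) x w * polar (⇑n) y z := by
  have h := aux_polar_mul n hm (x+w) y z
  have hx := aux_polar_mul n hm x y z
  have hw := aux_polar_mul n hm w y z
  have hn : n (x + w) = n x + n w + polar (⇑n) x w := by
    simp [QuadraticMap.polar]
  rw [add_mul, add_mul, polar_add_left, polar_add_right, polar_add_right, hn] at h
  linear_combination h - hx - hw

lemma aux_cayley (n : QuadraticForm k A)
    (hnd : ∀ a : A, (∀ b : A, polar (⇑n) a b = 0) → a = 0)
    (hm : ∀ a b : A, n (a * b) = n a * n b) (x : A) :
    x*x - polar (⇑n) x 1 • x + n x • (1:A) = 0 := by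
  apply hnd
  intro z
  have h1 := aux_exchange n hm x 1 x z
  rw [one_mul, one_mul] at h1
  have h2 := aux_polar_mul n hm x 1 z
  rw [mul_one] at h2
  rw [polar_add_left, polar_sub_left, polar_smul_left, polar_smul_left, smul_eq_mul,
    smul_eq_mul]
  linear_combination h1 - h2

omit [SMulCommClass k A A] [IsScalarTower k A A] in
lemma aux_norm_one (n : QuadraticForm k A)
    (hnd : ∀ a : A, (∀ b : A, polar (⇑n) a b = 0) → a = 0)
    (hm : ∀ a b : A, n (a * b) = n a * n b) (h1 : (1:A) ≠ 0) : n 1 = 1 := by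
  have h := hm 1 1
  rw [mul_one] at h
  by_cases hz : n 1 = 0
  · exfalso
    apply h1
    apply hnd
    intro b
    have hb : ∀ a : A, n a = 0 := fun a => by
      have := hm a 1; rw [mul_one, hz, mul_zero] at this; exact this
    simp [QuadraticMap.polar, hb]
  · field_simp at h
    exact h.symm
end Aux

/-- Any injective unital algebra homomorphism between composition algebras is
a partial isometry: if `f : B → A` is an injective homomorphism of composition algebras
`(B, n')` and `(A, n)` with `f e' = e`, then `n (f x) = n' x` for all `x ∈ B`. -/
theorem stmt_10 {k A B : Type*} [Field k]
    [NonAssocRing A] [Module k A] [SMulCommClass k A A] [IsScalarTower k A A]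
    [NonAssocRing B] [Module k B] [SMulCommClass k B B] [IsScalarTower k B B]
    (n : QuadraticForm k A)
    (hnd : ∀ a : A, (∀ b : A, polar (⇑n) a b = 0) → a = 0)
    (hm : ∀ a b : A, n (a * b) = n a * n b)
    (n' : QuadraticForm k B)
    (hnd' : ∀ a : B, (∀ b : B, polar (⇑n') a b = 0) → a = 0)
    (hm' : ∀ a b : B, n' (a * b) = n' a * n' b)
    (f : B →ₗ[k] A)
    (hfmul : ∀ x y : B, f (x * y) = f x * f y)
    (hfone : f 1 = 1)
    (hfinj : Function.Injective f) :
    ∀ x : B, n (f x) = n' x := by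
  intro x
  by_cases h1 : (1:A) = 0
  · -- A is trivial, hence B is trivial by injectivity
    have hA : ∀ a : A, a = 0 := fun a => by rw [← mul_one a, h1, mul_zero]
    have hx : x = 0 := hfinj (by rw [map_zero]; exact hA (f x))
    rw [hx, map_zero, QuadraticMap.map_zero, QuadraticMap.map_zero]
  · -- Cayley–Hamilton identities for x and f x
    have hcB := aux_cayley n' hnd' hm' x
    have h2 : f x * f x - polar (⇑n') x 1 • f x + n' x • (1:A) = 0 := by
      have h := congrArg f hcB
      simpa [map_add, _root_.map_sub, _root_.map_smul, hfmul, hfone] using h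
    have hcA := aux_cayley n hnd hm (f x)
    -- subtract the two identities
    have key : (n (f x) - n' x) • (1:A)
        = (polar (⇑n) (f x) 1 - polar (⇑n') x 1) • f x := by
      have h3 : (f x * f x - polar (⇑n) (f x) 1 • f x + n (f x) • (1:A))
          - (f x * f x - polar (⇑n') x 1 • f x + n' x • (1:A)) = 0 := by
        rw [hcA, h2, sub_zero]
      rw [sub_smul, sub_smul]
      linear_combination (norm := abel) h3
    by_cases hd : polar (⇑n) (f x) 1 - polar (⇑n') x 1 = 0
    · rw [hd, zero_smul] at key
      by_contra hc
      have hc' : n (f x) - n' x ≠ 0 := sub_ne_zero.mpr hc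
      apply h1
      have := congrArg (fun a => (n (f x) - n' x)⁻¹ • a) key
      simpa [smul_smul, inv_mul_cancel₀ hc'] using this
    · -- f x is a scalar multiple of 1
      set d := polar (⇑n) (f x) 1 - polar (⇑n') x 1 with hdef
      set r := d⁻¹ * (n (f x) - n' x) with hrdef
      have hfx : f x = r • (1:A) := by
        calc f x = d⁻¹ • (d • f x) := by rw [smul_smul, inv_mul_cancel₀ hd, one_smul]
        _ = d⁻¹ • ((n (f x) - n' x) • (1:A)) := by rw [key]
        _ = r • (1:A) := by rw [smul_smul]
      have hx : x = r • (1:B) := hfinj (by rw [LinearMap.map_smul, hfone, hfx])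
      have hB1 : (1:B) ≠ 0 := fun h => h1 (by rw [← hfone, h, map_zero])
      rw [hfx, hx, QuadraticMap.map_smul, QuadraticMap.map_smul,
        aux_norm_one n hnd hm h1, aux_norm_one n' hnd' hm' hB1]
end

section
/- The Cayley–Dickson double A(μ) = A ⊕ vA of a composition algebra A, with product (a₁ + v b₁)(a₂ + v b₂) = a₁a₂ + μ b₂ b̃₁ + v(ã₁ b₂ + a₂ b₁), is alternative if and only if A is associative. -/
open QuadraticMap

/-- The Cayley conjugate `ã = (a : e)e − a` in a composition algebra. -/
def cconj {k A : Type*} [Field k] [NonAssocRing A] [Module k A]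
    [SMulCommClass k A A] [IsScalarTower k A A]
    (n : QuadraticForm k A) (a : A) : A :=
  polar (⇑n) a 1 • (1 : A) - a

/-- The Cayley–Dickson product on `A × A`, writing `(a, b) = a + vb`:
`(a₁ + v b₁)(a₂ + v b₂) = a₁a₂ + μ b₂ b̃₁ + v(ã₁ b₂ + a₂ b₁)`. -/
def cdMul {k A : Type*} [Field k] [NonAssocRing A] [Module k A]
    [SMulCommClass k A A] [IsScalarTower k A A]
    (n : QuadraticForm k A) (μ : k) (x y : A × A) : A × A :=
  (x.1 * y.1 + μ • (y.2 * cconj n x.2), cconj n x.1 * y.2 + y.1 * x.2)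

set_option linter.unusedSectionVars false

section Aux
variable {k A : Type*} [Field k] [NonAssocRing A] [Module k A]
    [SMulCommClass k A A] [IsScalarTower k A A] (n : QuadraticForm k A)

lemma aux_mul1 (hm : ∀ a b : A, n (a*b) = n a * n b) (a b c : A) :
    polar (⇑n) (a*b) (a*c) = n a * polar (⇑n) b c := by
  simp only [QuadraticMap.polar, ← mul_add, hm]; ring

lemma aux_mul2 (hm : ∀ a b : A, n (a*b) = n a * n b) (a b c : A) :
    polar (⇑n) (a*c) (b*c) = polar (⇑n) a b * n c := by
  simp only [QuadraticMap.polar, ← add_mul, hm]; ring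

lemma aux_nadd (a b : A) : n (a + b) = n a + n b + polar (⇑n) a b := by
  simp only [QuadraticMap.polar]; ring

lemma aux_L (hm : ∀ a b : A, n (a*b) = n a * n b) (a b c e : A) :
    polar (⇑n) (a*c) (b*e) + polar (⇑n) (a*e) (b*c)
      = polar (⇑n) a b * polar (⇑n) c e := by
  have key := aux_mul2 n hm a b (c + e)
  simp only [mul_add, polar_add_left, polar_add_right, aux_nadd, aux_mul2 n hm] at key
  linear_combination key

lemma aux_n1 (hnd : ∀ a : A, (∀ b : A, polar (⇑n) a b = 0) → a = 0)
    (hm : ∀ a b : A, n (a*b) = n a * n b) (h1 : (1:A) ≠ 0) : n 1 = 1 := by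
  by_contra h
  refine h1 (hnd 1 fun b => ?_)
  have h2 := aux_mul1 n hm 1 1 b
  rw [one_mul, one_mul] at h2
  rcases mul_eq_zero.mp (by linear_combination -h2 : (n 1 - 1) * polar (⇑n) 1 b = 0) with h' | h'
  · exact absurd (by linear_combination h') h
  · exact h'

lemma aux_Lft (hm : ∀ a b : A, n (a*b) = n a * n b) (d b c : A) :
    polar (⇑n) (d*b) c = polar (⇑n) b (cconj n d * c) := by
  have key := aux_L n hm 1 d c b
  simp only [one_mul] at key
  rw [show cconj n d * c = polar (⇑n) d 1 • c - d * c by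
        simp [cconj, sub_mul, smul_mul_assoc]]
  rw [polar_sub_right, polar_smul_right, smul_eq_mul]
  linear_combination key + polar_comm (⇑n) (d*b) c + polar (⇑n) c b * polar_comm (⇑n) 1 d
    + polar (⇑n) d 1 * polar_comm (⇑n) c b

lemma aux_R (hm : ∀ a b : A, n (a*b) = n a * n b) (a c d : A) :
    polar (⇑n) (a*c) d = polar (⇑n) a (d * cconj n c) := by
  have key := aux_L n hm a d c 1
  simp only [mul_one] at key
  rw [show d * cconj n c = polar (⇑n) c 1 • d - d * c by
        simp [cconj, mul_sub, mul_smul_comm]]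
  rw [polar_sub_right, polar_smul_right, smul_eq_mul]
  linear_combination key

lemma aux_B11 (hn1 : n 1 = 1) : polar (⇑n) (1:A) 1 = 2 := by
  have h2 : (1+1 : A) = (2:k) • (1:A) := by rw [two_smul]
  simp only [QuadraticMap.polar, h2, QuadraticMap.map_smul, smul_eq_mul, hn1]
  norm_num

lemma aux_conj_one (hn1 : n 1 = 1) : cconj n (1:A) = 1 := by
  rw [cconj, aux_B11 n hn1, two_smul]; abel

lemma aux_T_conj (hn1 : n 1 = 1) (a : A) : polar (⇑n) (cconj n a) 1 = polar (⇑n) a 1 := by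
  rw [cconj, polar_sub_left, polar_smul_left, aux_B11 n hn1, smul_eq_mul]; ring

lemma aux_conj_conj (hn1 : n 1 = 1) (a : A) : cconj n (cconj n a) = a := by
  rw [cconj, aux_T_conj n hn1, cconj]; abel

lemma aux_conj_add (a b : A) : cconj n (a + b) = cconj n a + cconj n b := by
  simp only [cconj, polar_add_left, add_smul]; abel

lemma aux_conj_smul (s : k) (a : A) : cconj n (s • a) = s • cconj n a := by
  simp only [cconj, polar_smul_left, smul_eq_mul, mul_smul, smul_sub]

lemma aux_n_conj (hn1 : n 1 = 1) (a : A) : n (cconj n a) = n a := by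
  rw [cconj, sub_eq_add_neg, aux_nadd, QuadraticMap.map_smul, QuadraticMap.map_neg,
    polar_neg_right, polar_smul_left, smul_eq_mul, smul_eq_mul, hn1,
    polar_comm (⇑n) 1 a]
  ring

lemma aux_Texp (a z : A) : cconj n a * z + a * z = polar (⇑n) a 1 • z := by
  rw [cconj, sub_mul, smul_mul_assoc, one_mul]; abel

lemma aux_Texp' (a z : A) : polar (⇑n) a 1 • z = a * z + cconj n a * z := by
  rw [cconj, sub_mul, smul_mul_assoc, one_mul]; abel

lemma aux_Texpr (a z : A) : polar (⇑n) a 1 • z = z * a + z * cconj n a := by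
  rw [cconj, mul_sub, mul_smul_comm, mul_one]; abel

lemma aux_mul_conj (hn1 : n 1 = 1) (hnd : ∀ a : A, (∀ b : A, polar (⇑n) a b = 0) → a = 0)
    (hm : ∀ a b : A, n (a*b) = n a * n b) (a : A) :
    a * cconj n a = n a • 1 := by
  have hz : ∀ c, polar (⇑n) (a * cconj n a - n a • (1:A)) c = 0 := by
    intro c
    rw [polar_sub_left, polar_smul_left, aux_Lft n hm a (cconj n a) c]
    have h2 := aux_mul1 n hm (cconj n a) 1 c
    rw [mul_one] at h2
    rw [h2, aux_n_conj n hn1, smul_eq_mul]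
    ring
  have := hnd _ hz
  rwa [sub_eq_zero] at this

lemma aux_conj_mul (hn1 : n 1 = 1) (hnd : ∀ a : A, (∀ b : A, polar (⇑n) a b = 0) → a = 0)
    (hm : ∀ a b : A, n (a*b) = n a * n b) (a : A) :
    cconj n a * a = n a • 1 := by
  have hz : ∀ c, polar (⇑n) (cconj n a * a - n a • (1:A)) c = 0 := by
    intro c
    rw [polar_sub_left, polar_smul_left, aux_R n hm (cconj n a) a c]
    have h2 := aux_mul2 n hm 1 c (cconj n a)
    rw [one_mul] at h2
    rw [h2, aux_n_conj n hn1, smul_eq_mul, polar_comm (⇑n) 1 c]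
    ring
  have := hnd _ hz
  rwa [sub_eq_zero] at this

lemma aux_CH (hn1 : n 1 = 1) (hnd : ∀ a : A, (∀ b : A, polar (⇑n) a b = 0) → a = 0)
    (hm : ∀ a b : A, n (a*b) = n a * n b) (a : A) :
    a * a = polar (⇑n) a 1 • a - n a • 1 := by
  have h := aux_mul_conj n hn1 hnd hm a
  rw [cconj, mul_sub, mul_smul_comm, mul_one] at h
  rw [eq_sub_iff_add_eq, ← h]; abel

lemma aux_T_mul (hm : ∀ a b : A, n (a*b) = n a * n b) (a b : A) :
    polar (⇑n) (a*b) 1 = polar (⇑n) a 1 * polar (⇑n) b 1 - polar (⇑n) a b := by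
  rw [aux_Lft n hm a b 1, cconj, mul_one, polar_sub_right, polar_smul_right, smul_eq_mul]
  linear_combination -polar_comm (⇑n) b a

lemma aux_linCH (hn1 : n 1 = 1) (hnd : ∀ a : A, (∀ b : A, polar (⇑n) a b = 0) → a = 0)
    (hm : ∀ a b : A, n (a*b) = n a * n b) (a b : A) :
    a*b + b*a = polar (⇑n) a 1 • b + polar (⇑n) b 1 • a - polar (⇑n) a b • 1 := by
  have h := aux_CH n hn1 hnd hm (a + b)
  rw [mul_add, add_mul, add_mul, polar_add_left, aux_nadd,
    aux_CH n hn1 hnd hm a, aux_CH n hn1 hnd hm b] at h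
  have h2 : a*b + b*a = ((polar (⇑n) a 1 + polar (⇑n) b 1) • (a+b)
      - (n a + n b + polar (⇑n) a b) • (1:A))
      - (polar (⇑n) a 1 • a - n a • (1:A)) - (polar (⇑n) b 1 • b - n b • (1:A)) := by
    rw [← h]; abel
  rw [h2]; module

lemma aux_conj_mulrev (hn1 : n 1 = 1) (hnd : ∀ a : A, (∀ b : A, polar (⇑n) a b = 0) → a = 0)
    (hm : ∀ a b : A, n (a*b) = n a * n b) (a b : A) :
    cconj n (a*b) = cconj n b * cconj n a := by
  have hab : a*b = (polar (⇑n) a 1 • b + polar (⇑n) b 1 • a - polar (⇑n) a b • 1) - b*a := by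
    rw [← aux_linCH n hn1 hnd hm a b]; abel
  rw [cconj, cconj, cconj, aux_T_mul n hm]
  simp only [sub_mul, mul_sub, smul_mul_assoc, mul_smul_comm, smul_sub, smul_smul,
    one_mul, mul_one]
  rw [hab]
  module

end Aux

/-- The Cayley–Dickson double `A(μ) = A ⊕ vA` of a composition algebra `A`
is alternative if and only if `A` is associative. -/
theorem stmt_12 {k A : Type*} [Field k] [NonAssocRing A] [Module k A]
    [SMulCommClass k A A] [IsScalarTower k A A]
    (n : QuadraticForm k A)
    (hnd : ∀ a : A, (∀ b : A, polar (⇑n) a b = 0) → a = 0)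
    (hm : ∀ a b : A, n (a * b) = n a * n b)
    (μ : k) (hμ : μ ≠ 0) :
    (∀ x y : A × A,
        cdMul n μ (cdMul n μ x x) y = cdMul n μ x (cdMul n μ x y) ∧
        cdMul n μ (cdMul n μ y x) x = cdMul n μ y (cdMul n μ x x)) ↔
    (∀ a b c : A, a * b * c = a * (b * c)) := by
  classical
  by_cases h1 : (1:A) = 0
  · have hz : ∀ x : A, x = 0 := fun x => by rw [← mul_one x, h1, mul_zero]
    have hp : ∀ p q : A × A, p = q := fun p q =>
      Prod.ext ((hz p.1).trans (hz q.1).symm) ((hz p.2).trans (hz q.2).symm)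
    constructor
    · intro _ a b c; rw [hz (a*b*c), hz (a*(b*c))]
    · intro _ x y; exact ⟨hp _ _, hp _ _⟩
  · have hn1 : n 1 = 1 := aux_n1 n hnd hm h1
    have mc : ∀ z : A, z * cconj n z = n z • 1 := aux_mul_conj n hn1 hnd hm
    have cm : ∀ z : A, cconj n z * z = n z • 1 := aux_conj_mul n hn1 hnd hm
    have rev : ∀ z w : A, cconj n (z*w) = cconj n w * cconj n z :=
      aux_conj_mulrev n hn1 hnd hm
    have cc : ∀ z : A, cconj n (cconj n z) = z := aux_conj_conj n hn1
    constructor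
    · -- alternative → associative
      intro h e d f
      have k1 := congrArg Prod.fst ((h (cconj n e, cconj n f) (0, d)).1)
      simp only [cdMul, mul_zero, zero_mul, add_zero, zero_add] at k1
      rw [cc e, cc f] at k1
      rw [← aux_Texp' n e (cconj n f)] at k1
      rw [aux_conj_smul, cc f] at k1
      rw [mul_smul_comm] at k1
      rw [aux_Texp' n e (d*f)] at k1
      rw [smul_add, mul_smul_comm] at k1
      have k2 : μ • (e*(d*f)) = μ • (e*d*f) := by
        rw [add_comm (μ • (e * (d * f)))] at k1
        exact add_left_cancel k1
      have k3 := congrArg (fun z => μ⁻¹ • z) k2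
      simpa [smul_smul, inv_mul_cancel₀ hμ] using k3.symm
    · -- associative → alternative
      intro H x y
      obtain ⟨a, b⟩ := x
      obtain ⟨c, d⟩ := y
      have mc2 : ∀ z w : A, z * (cconj n z * w) = n z • w := fun z w => by
        rw [← H z (cconj n z) w, mc z, smul_mul_assoc, one_mul]
      have cm2 : ∀ z w : A, cconj n z * (z * w) = n z • w := fun z w => by
        rw [← H (cconj n z) z w, cm z, smul_mul_assoc, one_mul]
      constructor
      · refine Prod.ext ?_ ?_
        · show (a*a + μ•(b*cconj n b)) * c + μ•(d * cconj n (cconj n a*b + a*b))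
            = a*(a*c + μ•(d*cconj n b)) + μ•((cconj n a*d + c*b)*cconj n b)
          rw [aux_Texp n a b]
          simp only [aux_conj_add, aux_conj_smul, rev, cc, aux_conj_one n hn1, mc, cm,
            mc2, cm2, H, mul_add, add_mul, smul_add, mul_smul_comm, smul_mul_assoc,
            mul_one, one_mul]
          rw [aux_Texp' n a (d * cconj n b)]
          try simp only [H, mul_add, add_mul, smul_add, mul_smul_comm, smul_mul_assoc]
          module
        · show cconj n (a*a + μ•(b*cconj n b)) * d + c*(cconj n a*b + a*b)
            = cconj n a*(cconj n a*d + c*b) + (a*c + μ•(d*cconj n b))*b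
          rw [aux_Texp n a b]
          simp only [aux_conj_add, aux_conj_smul, rev, cc, aux_conj_one n hn1, mc, cm,
            mc2, cm2, H, mul_add, add_mul, smul_add, mul_smul_comm, smul_mul_assoc,
            mul_one, one_mul]
          rw [aux_Texp' n a (c * b)]
          try simp only [H, mul_add, add_mul, smul_add, mul_smul_comm, smul_mul_assoc]
          module
      · refine Prod.ext ?_ ?_
        · show (c*a + μ•(b*cconj n d))*a + μ•(b * cconj n (cconj n c*b + a*d))
            = c*(a*a + μ•(b*cconj n b)) + μ•((cconj n a*b + a*b)*cconj n d)
          rw [aux_Texp n a b]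
          simp only [aux_conj_add, aux_conj_smul, rev, cc, aux_conj_one n hn1, mc, cm,
            mc2, cm2, H, mul_add, add_mul, smul_add, mul_smul_comm, smul_mul_assoc,
            mul_one, one_mul]
          rw [aux_Texpr n a (b * cconj n d)]
          try simp only [H, mul_add, add_mul, smul_add, mul_smul_comm, smul_mul_assoc]
          module
        · show cconj n (c*a + μ•(b*cconj n d))*b + a*(cconj n c*b + a*d)
            = cconj n c*(cconj n a*b + a*b) + (a*a + μ•(b*cconj n b))*d
          rw [aux_Texp n a b]
          simp only [aux_conj_add, aux_conj_smul, rev, cc, aux_conj_one n hn1, mc, cm,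
            mc2, cm2, H, mul_add, add_mul, smul_add, mul_smul_comm, smul_mul_assoc,
            mul_one, one_mul]
          rw [aux_Texp' n a (cconj n c * b)]
          try simp only [H, mul_add, add_mul, smul_add, mul_smul_comm, smul_mul_assoc]
          module
end
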